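/- If a parity game admits a succinct progress measure μ, then the positional strategy for Even that follows only edges progressive in μ is winning for Even from every starting vertex. -/
import Mathlib


/-- The strict order on finite binary strings:
`0s < ε`, `ε < 1s`, `bs < bs' iff s < s'`, and `0s < 1s'`. -/
def bslt : List Bool → List Bool → Prop
  | [], [] => False
  | b :: _, [] => b = false
  | [], b :: _ => b = true
  | a :: s, b :: t => (a = false ∧ b = true) ∨ (a = b ∧ bslt s t)


theorem bslt_irrefl : ∀ s, ¬ bslt s s := by
  intro s
  induction s with
  | nil => simp [bslt]
  | cons a t ih => simp [bslt, ih]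

theorem bslt_trans : ∀ (a b c : List Bool), bslt a b → bslt b c → bslt a c := by
  intro a
  induction a with
  | nil =>
    intro b c h1 h2
    cases b with
    | nil => exact h1.elim
    | cons b₀ bs =>
      cases c with
      | nil => simp [bslt] at *; simp [h1] at h2
      | cons c₀ cs =>
        simp [bslt] at *
        rcases h2 with ⟨h, _⟩ | ⟨h, _⟩
        · subst h1; simp at h
        · exact h ▸ h1
  | cons a₀ as ih =>
    intro b c h1 h2
    cases b with
    | nil =>
      cases c with
      | nil => exact h2.elim
      | cons c₀ cs => exact Or.inl ⟨h1, h2⟩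
    | cons b₀ bs =>
      cases c with
      | nil =>
        rcases h1 with ⟨ha, hb⟩ | ⟨hab, _⟩
        · simp [bslt] at h2; rw [hb] at h2; exact absurd h2 (by simp)
        · simp [bslt] at h2 ⊢; rw [hab]; exact h2
      | cons c₀ cs =>
        rcases h1 with ⟨ha, hb⟩ | ⟨hab, hst⟩
        · rcases h2 with ⟨hb', hc⟩ | ⟨hbc, _⟩
          · rw [hb] at hb'; exact absurd hb' (by simp)
          · exact Or.inl ⟨ha, hbc ▸ hb⟩
        · rcases h2 with ⟨hb', hc⟩ | ⟨hbc, hst'⟩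
          · exact Or.inl ⟨hab ▸ hb', hc⟩
          · exact Or.inr ⟨hab.trans hbc, ih bs cs hst hst'⟩

/-- Strict lexicographic order on tuples of binary strings, in which a proper prefix
is strictly smaller. -/
def blex : List (List Bool) → List (List Bool) → Prop := List.Lex bslt


theorem blex_irrefl : ∀ l, ¬ blex l l := by
  intro l
  induction l with
  | nil => intro h; cases h
  | cons a t ih =>
    intro h
    cases h with
    | cons h => exact ih h
    | rel h => exact bslt_irrefl _ h

theorem blex_trans : ∀ {a b c : List (List Bool)}, blex a b → blex b c → blex a c := by
  intro a b c h1
  have h1' : List.Lex bslt a b := h1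
  induction h1' generalizing c with
  | nil => intro h2; cases h2 <;> exact List.Lex.nil
  | rel h =>
    intro h2
    cases h2 with
    | rel h' => exact List.Lex.rel (bslt_trans _ _ _ h h')
    | cons h' => exact List.Lex.rel h
  | cons h ih =>
    intro h2
    cases h2 with
    | rel h' => exact List.Lex.rel h'
    | cons h' => exact List.Lex.cons (ih h h')

theorem blex_take : ∀ (k : ℕ) {a b : List (List Bool)}, blex a b →
    a.take k = b.take k ∨ blex (a.take k) (b.take k) := by
  intro k a b h
  have h' : List.Lex bslt a b := h
  induction h' generalizing k with
  | nil =>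
    cases k with
    | zero => exact Or.inl rfl
    | succ k => exact Or.inr List.Lex.nil
  | rel hr =>
    cases k with
    | zero => exact Or.inl rfl
    | succ k => exact Or.inr (List.Lex.rel hr)
  | cons hc ih =>
    cases k with
    | zero => exact Or.inl rfl
    | succ k =>
      rcases ih k hc with h' | h'
      · exact Or.inl (by simp [List.take_succ_cons, h'])
      · exact Or.inr (List.Lex.cons h')

/-- The `p`-truncation of a tuple indexed by the odd priorities `d−1, d−3, …`
(in decreasing order): keep the components for odd priorities `≥ p`. -/
def strunc (d p : ℕ) (t : List (List Bool)) : List (List Bool) := t.take ((d + 1 - p) / 2)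

/-- Edge `(v, u)` is progressive in `μ`: `μ(v)|_{π(v)} ≥ μ(u)|_{π(v)}`,
strictly when `π(v)` is odd. -/
def Prog {V : Type*} (d : ℕ) (π : V → ℕ) (μ : V → List (List Bool)) (v u : V) : Prop :=
  (strunc d (π v) (μ u) = strunc d (π v) (μ v) ∨
    blex (strunc d (π v) (μ u)) (strunc d (π v) (μ v))) ∧
  (Odd (π v) → blex (strunc d (π v) (μ u)) (strunc d (π v) (μ v)))

/-- A play `f` is winning for Even if the highest priority occurring infinitely
often is even. -/
def WinsEven {V : Type*} (π : V → ℕ) (f : ℕ → V) : Prop :=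
  ∃ p, Even p ∧ (∃ N, ∀ n ≥ N, π (f n) ≤ p) ∧ (∀ N, ∃ n ≥ N, π (f n) = p)

/-- **Sufficiency.** If a parity game (with owner `v ↦ true` meaning Even owns `v`)
admits a succinct progress measure `μ`, then the positional strategy `σ` for Even
that follows only edges progressive in `μ` is winning for Even from every starting
vertex: every play consistent with `σ` is won by Even. -/
theorem sufficiency {V : Type*} [Fintype V] (d : ℕ) (E : V → V → Prop)
    (owner : V → Bool) (π : V → ℕ) (hπ : ∀ v, 1 ≤ π v ∧ π v ≤ d)
    (μ : V → List (List Bool))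
    (hsucc : ∀ v, (μ v).length ≤ d / 2 ∧
      ((μ v).map List.length).sum ≤ Nat.clog 2 (Nat.card {v : V // Odd (π v)}))
    (hpmEven : ∀ v, owner v = true → ∃ u, E v u ∧ Prog d π μ v u)
    (hpmOdd : ∀ v, owner v = false → ∀ u, E v u → Prog d π μ v u)
    (σ : V → V) (hσ : ∀ v, owner v = true → E v (σ v) ∧ Prog d π μ v (σ v))
    (f : ℕ → V)
    (hplay : ∀ n, (owner (f n) = true → f (n + 1) = σ (f n)) ∧
      (owner (f n) = false → E (f n) (f (n + 1)))) :
    WinsEven π f := by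
  classical
  have hProg : ∀ n, Prog d π μ (f n) (f (n+1)) := by
    intro n
    rcases Bool.eq_false_or_eq_true (owner (f n)) with h | h
    · have h2 := (hplay n).1 h; rw [h2]; exact (hσ _ h).2
    · exact hpmOdd _ h _ ((hplay n).2 h)
  set T : Finset ℕ := (Finset.range (d+1)).filter (fun q => ∀ N, ∃ n ≥ N, π (f n) = q)
    with hT
  have key : ∀ q, q ∉ T → ∃ N, ∀ n ≥ N, π (f n) ≠ q := by
    intro q hq
    by_cases hqd : q ≤ d
    · simp only [hT, Finset.mem_filter, Finset.mem_range] at hq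
      push_neg at hq
      rcases hq (by omega) with ⟨N, hN⟩
      exact ⟨N, fun n hn => hN n hn⟩
    · exact ⟨0, fun n _ h => hqd (h ▸ (hπ (f n)).2)⟩
  have key' : ∀ q, ∃ N, q ∉ T → ∀ n ≥ N, π (f n) ≠ q := by
    intro q
    by_cases h : q ∈ T
    · exact ⟨0, fun h' => absurd h h'⟩
    · rcases key q h with ⟨N, hN⟩; exact ⟨N, fun _ => hN⟩
  choose NB hNB using key'
  have hTne : T.Nonempty := by
    by_contra hne
    rw [Finset.not_nonempty_iff_eq_empty] at hne
    have h1 : π (f ((Finset.range (d+1)).sup NB)) ≤ d := (hπ _).2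
    exact hNB (π (f ((Finset.range (d+1)).sup NB))) (by simp [hne])
      ((Finset.range (d+1)).sup NB)
      (Finset.le_sup (Finset.mem_range.mpr (by omega))) rfl
  set p := T.max' hTne with hp
  have hpT : p ∈ T := T.max'_mem hTne
  have hp_inf : ∀ N, ∃ n ≥ N, π (f n) = p := (Finset.mem_filter.mp hpT).2
  have hbound : ∃ N, ∀ n ≥ N, π (f n) ≤ p := by
    refine ⟨(Finset.range (d+1)).sup NB, fun n hn => ?_⟩
    by_contra hgt
    push_neg at hgt
    have hq : π (f n) ∉ T := fun hmem => absurd (Finset.le_max' T _ hmem) (by omega)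
    have hd : π (f n) < d + 1 := by have := (hπ (f n)).2; omega
    exact hNB (π (f n)) hq n (le_trans (Finset.le_sup (Finset.mem_range.mpr hd)) hn) rfl
  rcases Nat.even_or_odd p with hev | hodd
  · exact ⟨p, hev, hbound, hp_inf⟩
  · exfalso
    obtain ⟨N₀, hN₀⟩ := hbound
    set s : ℕ → List (List Bool) := fun n => strunc d p (μ (f n)) with hs
    have hstep : ∀ n, N₀ ≤ n → s (n+1) = s n ∨ blex (s (n+1)) (s n) := by
      intro n hn
      have hq := hN₀ n hn
      have hP := (hProg n).1
      have hk : (d + 1 - p) / 2 ≤ (d + 1 - π (f n)) / 2 :=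
        Nat.div_le_div_right (by omega)
      have hrw : ∀ t, strunc d p t = (strunc d (π (f n)) t).take ((d+1-p)/2) := by
        intro t
        simp [strunc, List.take_take, Nat.min_eq_left hk]
      rcases hP with h | h
      · left; simp only [hs, hrw]; rw [h]
      · rcases blex_take ((d+1-p)/2) h with h' | h'
        · left; simp only [hs, hrw]; exact h'
        · right; simp only [hs, hrw]; exact h'
    have hmono : ∀ m n, N₀ ≤ m → m ≤ n → s n = s m ∨ blex (s n) (s m) := by
      intro m n hm hmn
      induction n with
      | zero =>
        have hm0 : m = 0 := by omega
        subst hm0; exact Or.inl rfl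
      | succ n ih =>
        rcases Nat.lt_or_ge m (n+1) with h | h
        · have hrec := ih (by omega)
          have hstep' := hstep n (by omega)
          rcases hstep' with h1 | h1 <;> rcases hrec with h2 | h2
          · exact Or.inl (h1.trans h2)
          · exact Or.inr (h1 ▸ h2)
          · exact Or.inr (h2 ▸ h1)
          · exact Or.inr (blex_trans h1 h2)
        · have hmeq : m = n+1 := by omega
          subst hmeq; exact Or.inl rfl
    have hstrict : ∀ n, π (f n) = p → blex (s (n+1)) (s n) := by
      intro n hn
      have hodd' : Odd (π (f n)) := by rw [hn]; exact hodd
      have h := (hProg n).2 hodd'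
      rw [hn] at h
      exact h
    have hm : ∀ N : ℕ, ∃ n, N ≤ n ∧ π (f n) = p := by
      intro N; rcases hp_inf N with ⟨n, hn, h⟩; exact ⟨n, hn, h⟩
    let mseq : ℕ → ℕ := fun i =>
      Nat.rec (hm N₀).choose (fun _ prev => (hm (prev+1)).choose) i
    have hm0 : N₀ ≤ mseq 0 ∧ π (f (mseq 0)) = p :=
      ⟨(hm N₀).choose_spec.1, (hm N₀).choose_spec.2⟩
    have hmsucc : ∀ i, mseq i + 1 ≤ mseq (i+1) ∧ π (f (mseq (i+1))) = p := fun i =>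
      ⟨(hm (mseq i + 1)).choose_spec.1, (hm (mseq i + 1)).choose_spec.2⟩
    have hge : ∀ i, N₀ ≤ mseq i := by
      intro i
      induction i with
      | zero => exact hm0.1
      | succ i ih => have := (hmsucc i).1; omega
    have hpi : ∀ i, π (f (mseq i)) = p := by
      intro i
      cases i with
      | zero => exact hm0.2
      | succ i => exact (hmsucc i).2
    have hmono' : ∀ i j, i < j → mseq i + 1 ≤ mseq j := by
      intro i j hij
      induction j with
      | zero => omega
      | succ j ih =>
        rcases Nat.lt_or_ge i j with h | h
        · have := ih h; have := (hmsucc j).1; omega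
        · have hij' : i = j := by omega
          subst hij'; exact (hmsucc i).1
    set g : ℕ → List (List Bool) := fun i => s (mseq i + 1) with hg
    have hdec : ∀ i j, i < j → blex (g j) (g i) := by
      intro i j hij
      have h1 : blex (s (mseq j + 1)) (s (mseq j)) := hstrict _ (hpi j)
      have h2 := hmono (mseq i + 1) (mseq j) (by have := hge i; omega) (hmono' i j hij)
      rcases h2 with h2 | h2
      · rw [h2] at h1; exact h1
      · exact blex_trans h1 h2
    have hinj : Function.Injective g := by
      intro i j hij
      by_contra hne
      rcases Nat.lt_or_ge i j with h | h
      · exact blex_irrefl _ (hij ▸ hdec i j h)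
      · have h' : j < i := by omega
        exact blex_irrefl _ (hij ▸ hdec j i h')
    have hfin : (Set.range (fun v => strunc d p (μ v))).Finite := Set.finite_range _
    exact hfin.not_infinite
      (Set.infinite_of_injective_forall_mem hinj (fun i => ⟨f (mseq i + 1), rfl⟩))
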